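/- arXiv:1703.05011 — 3 statements merged into one kernel-verified Lean document; each statement's English description precedes it below -/
import Mathlib

section
/- The parallel composition of automata realizes the parallel composition of languages: for NFAs A1 over Σ1 and A2 over Σ2, L(A1 ∥ A2) = L(A1) ∥ L(A2) and L_m(A1 ∥ A2) = L_m(A1) ∥ L_m(A2). -/
open scoped Classical in
noncomputable def proj {σ : Type*} (S : Set σ) (w : List σ) : List σ :=
  w.filter (fun a => decide (a ∈ S))

noncomputable def par {σ : Type*} (S1 S2 : Set σ) (L1 L2 : Set (List σ)) : Set (List σ) :=
  {w | (∀ a ∈ w, a ∈ S1 ∪ S2) ∧ proj S1 w ∈ L1 ∧ proj S2 w ∈ L2}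

/-- An NFA together with its alphabet. -/
structure NFA' (Q σ : Type*) where
  alph : Set σ
  δ : Q → σ → Set Q
  I : Set Q
  F : Set Q

def NFA'.stepSet {Q σ : Type*} (A : NFA' Q σ) (S : Set Q) (a : σ) : Set Q :=
  ⋃ q ∈ S, A.δ q a

def NFA'.evalFrom {Q σ : Type*} (A : NFA' Q σ) (S : Set Q) (w : List σ) : Set Q :=
  w.foldl A.stepSet S

def NFA'.lang {Q σ : Type*} (A : NFA' Q σ) : Set (List σ) :=
  {w | (A.evalFrom A.I w).Nonempty}

def NFA'.langM {Q σ : Type*} (A : NFA' Q σ) : Set (List σ) :=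
  {w | (A.evalFrom A.I w ∩ A.F).Nonempty}

/-- An NFA is well-formed if it has transitions only under events of its alphabet. -/
def NFA'.WellFormed {Q σ : Type*} (A : NFA' Q σ) : Prop :=
  ∀ q e, e ∉ A.alph → A.δ q e = ∅

open scoped Classical in
/-- Parallel composition of NFAs: shared events synchronize, private events interleave. -/
noncomputable def parNFA {Q1 Q2 σ : Type*} (A : NFA' Q1 σ) (B : NFA' Q2 σ) :
    NFA' (Q1 × Q2) σ where
  alph := A.alph ∪ B.alph
  δ := fun p e =>
    if e ∈ A.alph ∧ e ∈ B.alph then A.δ p.1 e ×ˢ B.δ p.2 e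
    else if e ∈ A.alph then A.δ p.1 e ×ˢ {p.2}
    else if e ∈ B.alph then {p.1} ×ˢ B.δ p.2 e
    else ∅
  I := A.I ×ˢ B.I
  F := A.F ×ˢ B.F


open scoped Classical

lemma proj_cons {σ : Type*} (S : Set σ) (a : σ) (w : List σ) :
    proj S (a :: w) = if a ∈ S then a :: proj S w else proj S w := by
  classical
  by_cases h : a ∈ S <;> simp [proj, List.filter_cons, h]

lemma NFA'.evalFrom_cons {Q σ : Type*} (A : NFA' Q σ) (S : Set Q) (a : σ) (w : List σ) :
    A.evalFrom S (a :: w) = A.evalFrom (A.stepSet S a) w := rfl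

lemma NFA'.evalFrom_empty {Q σ : Type*} (A : NFA' Q σ) : ∀ w, A.evalFrom ∅ w = ∅
  | [] => rfl
  | a :: w => by
    rw [NFA'.evalFrom_cons]
    have h : A.stepSet ∅ a = ∅ := by simp [NFA'.stepSet]
    rw [h]; exact A.evalFrom_empty w

lemma stepSet_par {Q1 Q2 σ : Type*} (A : NFA' Q1 σ) (B : NFA' Q2 σ)
    (S1 : Set Q1) (S2 : Set Q2) (a : σ) :
    (parNFA A B).stepSet (S1 ×ˢ S2) a =
      if a ∈ A.alph ∧ a ∈ B.alph then A.stepSet S1 a ×ˢ B.stepSet S2 a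
      else if a ∈ A.alph then A.stepSet S1 a ×ˢ S2
      else if a ∈ B.alph then S1 ×ˢ B.stepSet S2 a
      else ∅ := by
  classical
  ext ⟨x, y⟩
  by_cases h1 : a ∈ A.alph <;> by_cases h2 : a ∈ B.alph <;>
    simp [NFA'.stepSet, parNFA, h1, h2, Set.mem_prod] <;> aesop

lemma eval_par_good {Q1 Q2 σ : Type*} (A : NFA' Q1 σ) (B : NFA' Q2 σ) :
    ∀ (w : List σ) (S1 : Set Q1) (S2 : Set Q2),
    (∀ a ∈ w, a ∈ A.alph ∪ B.alph) →
    (parNFA A B).evalFrom (S1 ×ˢ S2) w =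
      A.evalFrom S1 (proj A.alph w) ×ˢ B.evalFrom S2 (proj B.alph w)
  | [], S1, S2, _ => by simp [NFA'.evalFrom, proj]
  | a :: w, S1, S2, h => by
    have ht : ∀ b ∈ w, b ∈ A.alph ∪ B.alph := fun b hb => h b (List.mem_cons_of_mem _ hb)
    have ha := h a List.mem_cons_self
    rw [NFA'.evalFrom_cons, stepSet_par]
    by_cases h1 : a ∈ A.alph <;> by_cases h2 : a ∈ B.alph
    · rw [if_pos ⟨h1, h2⟩, eval_par_good A B w _ _ ht, proj_cons, proj_cons, if_pos h1,
        if_pos h2, NFA'.evalFrom_cons, NFA'.evalFrom_cons]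
    · rw [if_neg (by tauto), if_pos h1, eval_par_good A B w _ _ ht, proj_cons, proj_cons,
        if_pos h1, if_neg h2, NFA'.evalFrom_cons]
    · rw [if_neg (by tauto), if_neg h1, if_pos h2, eval_par_good A B w _ _ ht, proj_cons,
        proj_cons, if_neg h1, if_pos h2, NFA'.evalFrom_cons]
    · exact absurd ha (by simp [h1, h2])

lemma eval_par_bad {Q1 Q2 σ : Type*} (A : NFA' Q1 σ) (B : NFA' Q2 σ) :
    ∀ (w : List σ) (S1 : Set Q1) (S2 : Set Q2),
    (∃ a ∈ w, a ∉ A.alph ∪ B.alph) →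
    (parNFA A B).evalFrom (S1 ×ˢ S2) w = ∅
  | [], _, _, h => by simp at h
  | a :: w, S1, S2, h => by
    rw [NFA'.evalFrom_cons, stepSet_par]
    by_cases ha : a ∈ A.alph ∪ B.alph
    · obtain ⟨b, hb, hb2⟩ := h
      rcases List.mem_cons.1 hb with rfl | hb'
      · exact absurd ha hb2
      · have hbad : ∃ c ∈ w, c ∉ A.alph ∪ B.alph := ⟨b, hb', hb2⟩
        rcases Set.mem_union _ _ _ |>.1 ha with h1 | h2
        · by_cases h2 : a ∈ B.alph
          · rw [if_pos ⟨h1, h2⟩]; exact eval_par_bad A B w _ _ hbad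
          · rw [if_neg (by tauto), if_pos h1]; exact eval_par_bad A B w _ _ hbad
        · by_cases h1 : a ∈ A.alph
          · rw [if_pos ⟨h1, h2⟩]; exact eval_par_bad A B w _ _ hbad
          · rw [if_neg (by tauto), if_neg h1, if_pos h2]; exact eval_par_bad A B w _ _ hbad
    · simp only [Set.mem_union] at ha; push_neg at ha
      rw [if_neg (by tauto), if_neg ha.1, if_neg ha.2]
      exact NFA'.evalFrom_empty _ w

/-- the parallel composition of automata realizes the parallel
composition of their languages. -/
theorem parNFA_lang {Q1 Q2 σ : Type*} (A : NFA' Q1 σ) (B : NFA' Q2 σ)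
    (hA : A.WellFormed) (hB : B.WellFormed) :
    (parNFA A B).lang = par A.alph B.alph A.lang B.lang ∧
    (parNFA A B).langM = par A.alph B.alph A.langM B.langM := by
  have hI : (parNFA A B).I = A.I ×ˢ B.I := rfl
  have hF : (parNFA A B).F = A.F ×ˢ B.F := rfl
  constructor
  · ext w
    by_cases hw : ∀ a ∈ w, a ∈ A.alph ∪ B.alph
    · simp only [NFA'.lang, par, Set.mem_setOf_eq, hI,
        eval_par_good A B w A.I B.I hw, Set.prod_nonempty_iff]
      tauto
    · simp only [NFA'.lang, par, Set.mem_setOf_eq, hI,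
        eval_par_bad A B w A.I B.I (by push_neg at hw; simpa using hw)]
      constructor
      · rintro ⟨x, hx⟩; exact absurd hx (Set.notMem_empty x)
      · rintro ⟨h', -⟩; exact absurd h' hw
  · ext w
    by_cases hw : ∀ a ∈ w, a ∈ A.alph ∪ B.alph
    · simp only [NFA'.langM, par, Set.mem_setOf_eq, hI, hF,
        eval_par_good A B w A.I B.I hw, Set.prod_inter_prod, Set.prod_nonempty_iff]
      tauto
    · simp only [NFA'.langM, par, Set.mem_setOf_eq, hI, hF,
        eval_par_bad A B w A.I B.I (by push_neg at hw; simpa using hw)]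
      constructor
      · rintro ⟨x, ⟨hx, -⟩⟩; exact absurd hx (Set.notMem_empty x)
      · rintro ⟨h', -⟩; exact absurd h' hw
end

section
/- If (L_j)_{j∈J} is a finite family of languages with L_j ⊆ Σ_j* and the alphabets are pairwise disjoint (Σ_j ∩ Σ_{j'} = ∅ for j ≠ j'), and each L_j is nonblocking in the sense that cl(M_j) = L_j for given marked languages M_j ⊆ L_j, then cl(∥_{j∈J} M_j) = ∥_{j∈J} L_j. -/
def cl {α : Type*} (L : Set (List α)) : Set (List α) := {w | ∃ u, w ++ u ∈ L}

/-- Parallel composition of a family of languages `L j ⊆ (Sig j)*`,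
taken over the union alphabet. -/
noncomputable def parFam {σ : Type*} {J : Type*} (Sig : J → Set σ)
    (L : J → Set (List σ)) : Set (List σ) :=
  {w | (∀ a ∈ w, ∃ j, a ∈ Sig j) ∧ ∀ j, proj (Sig j) w ∈ L j}

open scoped Classical

lemma proj_append {σ : Type*} (S : Set σ) (a b : List σ) :
    proj S (a ++ b) = proj S a ++ proj S b := by
  simp [proj, List.filter_append]

lemma proj_eq_self {σ : Type*} (S : Set σ) (w : List σ) (h : ∀ a ∈ w, a ∈ S) :
    proj S w = w := by
  simp [proj, List.filter_eq_self]; exact h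

lemma proj_eq_nil {σ : Type*} (S : Set σ) (w : List σ) (h : ∀ a ∈ w, a ∉ S) :
    proj S w = [] := by
  simp only [proj, List.filter_eq_nil_iff]
  intro a ha; simpa using h a ha

lemma proj_flatMap {σ J : Type*} (Sig : J → Set σ)
    (hdisj : ∀ j j' : J, j ≠ j' → Sig j ∩ Sig j' = ∅)
    (u : J → List σ) (hu : ∀ j, ∀ a ∈ u j, a ∈ Sig j)
    (j : J) (ls : List J) (hnd : ls.Nodup) (hj : j ∈ ls) :
    proj (Sig j) (ls.flatMap u) = u j := by
  induction ls with
  | nil => simp at hj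
  | cons x rest ih =>
    rw [List.flatMap_cons, proj_append]
    rcases List.mem_cons.mp hj with rfl | hjr
    · rw [proj_eq_self _ _ (hu j), proj_eq_nil, List.append_nil]
      intro a ha
      simp only [List.mem_flatMap] at ha
      obtain ⟨j', hj', ha'⟩ := ha
      have hne : j ≠ j' := by rintro rfl; exact (List.nodup_cons.mp hnd).1 hj'
      intro haj
      have : a ∈ Sig j ∩ Sig j' := ⟨haj, hu j' a ha'⟩
      rw [hdisj j j' hne] at this; exact this
    · have hne : j ≠ x := by rintro rfl; exact (List.nodup_cons.mp hnd).1 hjr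
      rw [proj_eq_nil, ih (List.nodup_cons.mp hnd).2 hjr, List.nil_append]
      intro a ha haj
      have : a ∈ Sig j ∩ Sig x := ⟨haj, hu x a ha⟩
      rw [hdisj j x hne] at this; exact this

/-- a finite family of nonblocking languages over pairwise
disjoint alphabets has a nonblocking parallel composition. -/
theorem disjoint_parallel_nonblocking {σ : Type*} (J : Type*) [Fintype J]
    (Sig : J → Set σ)
    (hdisj : ∀ j j' : J, j ≠ j' → Sig j ∩ Sig j' = ∅)
    (M L : J → Set (List σ))
    (hsub : ∀ j, M j ⊆ L j)
    (hL : ∀ j, ∀ w ∈ L j, ∀ a ∈ w, a ∈ Sig j)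
    (hnb : ∀ j, cl (M j) = L j) :
    cl (parFam Sig M) = parFam Sig L := by
  ext w
  constructor
  · rintro ⟨u, hall, hproj⟩
    refine ⟨fun a ha => hall a (List.mem_append_left u ha), fun j => ?_⟩
    rw [← hnb j]
    refine ⟨proj (Sig j) u, ?_⟩
    rw [← proj_append]; exact hproj j
  · rintro ⟨hall, hproj⟩
    -- choose completions
    have hch : ∀ j, ∃ v, proj (Sig j) w ++ v ∈ M j := by
      intro j
      have := hproj j
      rw [← hnb j] at this
      exact this
    choose v hv using hch
    have hvS : ∀ j, ∀ a ∈ v j, a ∈ Sig j := by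
      intro j a ha
      exact hL j _ (hsub j (hv j)) a (List.mem_append_right _ ha)
    set ls := (Finset.univ : Finset J).toList with hls
    refine ⟨ls.flatMap v, ⟨?_, ?_⟩⟩
    · intro a ha
      rcases List.mem_append.mp ha with h | h
      · exact hall a h
      · simp only [List.mem_flatMap] at h
        obtain ⟨j, _, ha'⟩ := h
        exact ⟨j, hvS j a ha'⟩
    · intro j
      rw [proj_append, proj_flatMap Sig hdisj v hvS j ls (Finset.nodup_toList _)
        (by simp [hls])]
      exact hv j
end

section
/- In the construction of Theorem 1, the DFA A built from a directed graph G = (V, E, s, t) is nonblocking if and only if t is not reachable from s in G. -/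
structure DFA' (Q σ : Type*) where
  δ : Q → σ → Option Q
  q0 : Q
  F : Set Q

def DFA'.evalFrom {Q σ : Type*} (A : DFA' Q σ) (o : Option Q) (w : List σ) : Option Q :=
  w.foldl (fun o a => o.bind fun q => A.δ q a) o

def DFA'.lang {Q σ : Type*} (A : DFA' Q σ) : Set (List σ) :=
  {w | (A.evalFrom (some A.q0) w).isSome}

def DFA'.langM {Q σ : Type*} (A : DFA' Q σ) : Set (List σ) :=
  {w | ∃ q ∈ A.F, A.evalFrom (some A.q0) w = some q}

open scoped Classical in
/-- The DFA built from a directed graph `(V, E)` with source `s` and target `t`: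
states are `V` plus a fresh non-marked state `t'` (modeled as `none`), every edge
gives one transition under its own distinct label (the edge itself), and one
extra transition, under a fresh label, leads from `t` to `t'`. All states of `V`
are marked, `t'` is not. -/
noncomputable def graphDFA {V : Type*} (E : Set (V × V)) (s t : V) :
    DFA' (Option V) ((V × V) ⊕ Unit) where
  δ := fun q e =>
    match q, e with
    | some u, Sum.inl p => if p.1 = u ∧ p ∈ E then some (some p.2) else none
    | some u, Sum.inr _ => if u = t then some none else none
    | none, _ => none
  q0 := some s
  F := {q | q ≠ none}


lemma DFA'.evalFrom_none {Q σ : Type*} (A : DFA' Q σ) (w : List σ) :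
    A.evalFrom none w = none := by
  induction w with
  | nil => rfl
  | cons a w ih => simpa [DFA'.evalFrom] using ih

lemma DFA'.evalFrom_append {Q σ : Type*} (A : DFA' Q σ) (o : Option Q) (w u : List σ) :
    A.evalFrom o (w ++ u) = A.evalFrom (A.evalFrom o w) u := by
  simp [DFA'.evalFrom, List.foldl_append]

lemma graphDFA_sound {V : Type*} (E : Set (V × V)) (s t : V) :
    ∀ (w : List ((V × V) ⊕ Unit)) (u : V) (q : Option V),
      (graphDFA E s t).evalFrom (some (some u)) w = some q →
      Relation.ReflTransGen (fun a b => (a, b) ∈ E) u (q.getD t) := by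
  intro w
  induction w with
  | nil =>
    intro u q h
    simp [DFA'.evalFrom] at h
    subst h; exact .refl
  | cons a w ih =>
    intro u q h
    rcases a with p | _
    · by_cases hp : p.1 = u ∧ p ∈ E
      · have h' : (graphDFA E s t).evalFrom (some (some p.2)) w = some q := by
          simpa [DFA'.evalFrom, graphDFA, hp] using h
        have hedge : (u, p.2) ∈ E := by
          obtain ⟨h1, h2⟩ := hp; subst h1; simpa using h2
        exact Relation.ReflTransGen.head hedge (ih p.2 q h')
      · exfalso
        have : (graphDFA E s t).evalFrom none w = some q := by
          simpa [DFA'.evalFrom, graphDFA, hp] using h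
        simp [DFA'.evalFrom_none] at this
    · by_cases hu : u = t
      · have h' : (graphDFA E s t).evalFrom (some none) w = some q := by
          simpa [DFA'.evalFrom, graphDFA, hu] using h
        cases w with
        | nil =>
          simp [DFA'.evalFrom] at h'
          subst hu; rw [← h']; exact .refl
        | cons b rest =>
          exfalso
          have : (graphDFA E s t).evalFrom none rest = some q := by
            simpa [DFA'.evalFrom, graphDFA] using h'
          simp [DFA'.evalFrom_none] at this
      · exfalso
        have : (graphDFA E s t).evalFrom none w = some q := by
          simpa [DFA'.evalFrom, graphDFA, hu] using h
        simp [DFA'.evalFrom_none] at this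

lemma graphDFA_complete {V : Type*} (E : Set (V × V)) (s t : V) {u v : V}
    (h : Relation.ReflTransGen (fun a b => (a, b) ∈ E) u v) :
    ∃ w, (graphDFA E s t).evalFrom (some (some u)) w = some (some v) := by
  induction h using Relation.ReflTransGen.head_induction_on with
  | refl => exact ⟨[], rfl⟩
  | @head a c hab _ ih =>
    obtain ⟨w, hw⟩ := ih
    exact ⟨Sum.inl (a, c) :: w, by simpa [DFA'.evalFrom, graphDFA, hab] using hw⟩

/-- the DFA built from the graph is nonblocking iff `t` is not
reachable from `s` in the graph. -/
theorem graphDFA_nonblocking_iff {V : Type*} (E : Set (V × V)) (s t : V) :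
    cl (graphDFA E s t).langM = (graphDFA E s t).lang ↔
      ¬ Relation.ReflTransGen (fun u v => (u, v) ∈ E) s t := by
  constructor
  · intro heq hreach
    obtain ⟨w, hw⟩ := graphDFA_complete E s t hreach
    set A := graphDFA E s t
    have hq0 : A.q0 = some s := rfl
    have hw' : A.evalFrom (some A.q0) w = some (some t) := hw
    have hdead : A.evalFrom (some A.q0) (w ++ [Sum.inr ()]) = some none := by
      rw [A.evalFrom_append, hw']
      simp [DFA'.evalFrom, A, graphDFA]
    have hlang : (w ++ [Sum.inr ()]) ∈ A.lang := by
      simp [DFA'.lang, hdead]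
    rw [← heq] at hlang
    obtain ⟨u, q, hqF, hq⟩ := hlang
    rw [A.evalFrom_append, hdead] at hq
    cases u with
    | nil => simp [DFA'.evalFrom] at hq; exact hqF hq.symm
    | cons b rest =>
      have : A.evalFrom none rest = some q := by
        simpa [DFA'.evalFrom, A, graphDFA] using hq
      simp [DFA'.evalFrom_none] at this
  · intro hreach
    ext w
    constructor
    · rintro ⟨u, q, hqF, hq⟩
      have : ((graphDFA E s t).evalFrom (some (graphDFA E s t).q0) w).isSome := by
        rw [DFA'.evalFrom_append] at hq
        rcases ho : (graphDFA E s t).evalFrom (some (graphDFA E s t).q0) w with _ | q'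
        · rw [ho] at hq; simp [DFA'.evalFrom_none] at hq
        · simp
      exact this
    · intro hw
      rcases hq : (graphDFA E s t).evalFrom (some (graphDFA E s t).q0) w with _ | q'
      · simp [DFA'.lang, hq] at hw
      · cases q' with
        | none =>
          exfalso
          exact hreach (by simpa using graphDFA_sound E s t w s none hq)
        | some v =>
          exact ⟨[], some v, by simp [graphDFA], by simpa using hq⟩
end
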